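/- Let {Σ_N} be an arbitrary sequence of regular strategy profiles on a sequence of instances of the binary voting model. If lim_{N→∞} A(Σ_N) = 1 does NOT hold, then there exists a constant ε > 0 such that for infinitely many N the profile Σ_N is not an ε-strong Bayes Nash Equilibrium. -/

import Mathlib

namespace Voting

/-- The two world states: `L` (low) and `H` (high). -/
inductive WState : Type
  | L
  | H
deriving DecidableEq

instance instFintypeWState : Fintype WState :=
  ⟨{WState.L, WState.H}, by intro x; cases x <;> simp⟩

/-- The two alternatives: `A` (accept) and `R` (reject). -/
inductive Alt : Type
  | A
  | R
deriving DecidableEq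

instance instFintypeAlt : Fintype Alt :=
  ⟨{Alt.A, Alt.R}, by intro x; cases x <;> simp⟩

/-- The shared parameters of a binary voting instance. -/
structure BParams where
  /-- majority threshold -/
  μ : ℝ
  hμ0 : 0 < μ
  hμ1 : μ < 1
  /-- prior of state `L` -/
  PL : ℝ
  /-- prior of state `H` -/
  PH : ℝ
  hPL : 0 < PL
  hPH : 0 < PH
  hPsum : PL + PH = 1
  /-- `Psig s ω` : probability of signal `s` in state `ω`; `true` is the signal `h`,
  `false` is the signal `l`. -/
  Psig : Bool → WState → ℝ
  hPsig : ∀ s ω, 0 ≤ Psig s ω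
  hPsigsum : ∀ ω, Psig false ω + Psig true ω = 1
  /-- positive correlation: `P_{hH} > P_{hL}` -/
  hcorr : Psig true WState.L < Psig true WState.H
  /-- upper bound of the utility functions -/
  B : ℕ
  hB : 0 < B

/-- A binary voting instance with `N` agents. -/
structure BInstance extends BParams where
  N : ℕ
  /-- the utility function of each agent -/
  u : Fin N → WState → Alt → ℕ
  hub : ∀ n ω a, u n ω a ≤ B
  huA : ∀ n, u n WState.L Alt.A < u n WState.H Alt.A
  huR : ∀ n, u n WState.H Alt.R < u n WState.L Alt.R

/-- A (mixed) strategy profile: for each agent, the probability of voting for `A`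
upon each signal. -/
abbrev Profile (I : BInstance) : Type := Fin I.N → Bool → ℝ

/-- All coordinates of the profile are genuine probabilities. -/
def ValidProfile (I : BInstance) (sp : Profile I) : Prop :=
  ∀ n s, 0 ≤ sp n s ∧ sp n s ≤ 1

/-- Probability that agent `n` votes for `A`, conditioned on the world state `ω`. -/
noncomputable def pA (I : BInstance) (sp : Profile I) (n : Fin I.N) (ω : WState) : ℝ :=
  I.Psig false ω * sp n false + I.Psig true ω * sp n true

open Finset in
/-- `lambdaA I sp ω` : the probability that at least `μ·N` agents vote for `A`,
conditioned on the world state `ω` (conditionally on the state, the votes are independent,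
agent `n` voting for `A` with probability `pA I sp n ω`). -/
noncomputable def lambdaA (I : BInstance) (sp : Profile I) (ω : WState) : ℝ :=
  ∑ v : Fin I.N → Bool,
    if I.μ * (I.N : ℝ) ≤ ((univ.filter fun n => v n = true).card : ℝ) then
      ∏ n, (if v n = true then pA I sp n ω else 1 - pA I sp n ω)
    else 0

/-- The fidelity of a strategy profile: the probability that the informed majority
decision is reached. -/
noncomputable def fid (I : BInstance) (sp : Profile I) : ℝ :=
  I.PL * (1 - lambdaA I sp WState.L) + I.PH * lambdaA I sp WState.H

/-- The ex-ante expected utility of agent `n` under profile `sp`. -/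
noncomputable def ut (I : BInstance) (sp : Profile I) (n : Fin I.N) : ℝ :=
  I.PL * (lambdaA I sp WState.L * (I.u n WState.L Alt.A : ℝ)
      + (1 - lambdaA I sp WState.L) * (I.u n WState.L Alt.R : ℝ))
    + I.PH * (lambdaA I sp WState.H * (I.u n WState.H Alt.A : ℝ)
      + (1 - lambdaA I sp WState.H) * (I.u n WState.H Alt.R : ℝ))

/-- A friendly agent prefers `A` in both states. -/
def Friendly (I : BInstance) (n : Fin I.N) : Prop :=
  ∀ ω, I.u n ω Alt.R < I.u n ω Alt.A

/-- An unfriendly agent prefers `R` in both states. -/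
def Unfriendly (I : BInstance) (n : Fin I.N) : Prop :=
  ∀ ω, I.u n ω Alt.A < I.u n ω Alt.R

/-- A contingent agent prefers `A` in state `H` and `R` in state `L`. -/
def Contingent (I : BInstance) (n : Fin I.N) : Prop :=
  I.u n WState.H Alt.R < I.u n WState.H Alt.A ∧ I.u n WState.L Alt.A < I.u n WState.L Alt.R

/-- A profile is regular if every friendly agent always votes for `A` and every
unfriendly agent always votes for `R`. -/
def Regular (I : BInstance) (sp : Profile I) : Prop :=
  (∀ n, Friendly I n → ∀ s, sp n s = 1) ∧ (∀ n, Unfriendly I n → ∀ s, sp n s = 0)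

/-- `ε`-strong Bayes Nash Equilibrium: no coalition `D` can deviate so that no member
is worse off and some member gains more than `ε`. -/
def IsEpsBNE (I : BInstance) (sp : Profile I) (ε : ℝ) : Prop :=
  ¬ ∃ (D : Set (Fin I.N)) (sp' : Profile I),
      ValidProfile I sp' ∧
      (∀ n, n ∉ D → sp' n = sp n) ∧
      (∀ n ∈ D, ut I sp n ≤ ut I sp' n) ∧
      (∃ n ∈ D, ut I sp n + ε < ut I sp' n)

/-- Number of friendly agents. -/
noncomputable def friendlyCount (I : BInstance) : ℕ := {n | Friendly I n}.ncard

/-- Number of unfriendly agents. -/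
noncomputable def unfriendlyCount (I : BInstance) : ℕ := {n | Unfriendly I n}.ncard

/-- Number of contingent agents. -/
noncomputable def contingentCount (I : BInstance) : ℕ := {n | Contingent I n}.ncard

/-- A sequence of binary voting instances sharing the same parameters, in which the
instance indexed by `N` has `N` agents. -/
structure BSeq where
  params : BParams
  inst : ℕ → BInstance
  hN : ∀ N, (inst N).N = N
  hshare : ∀ N, (inst N).toBParams = params

/-- A sequence of binary voting instances with fixed approximate fractions
`(αF, αU, αC)` of friendly, unfriendly and contingent agents. -/
structure BSeqFrac extends BSeq where
  αF : ℝ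
  αU : ℝ
  αC : ℝ
  hαF0 : 0 ≤ αF
  hαU0 : 0 ≤ αU
  hαC0 : 0 ≤ αC
  hαsum : αF + αU + αC = 1
  hαFμ : αF < params.μ
  hαUμ : αU < 1 - params.μ
  hNF : ∀ N : ℕ, friendlyCount (inst N) = ⌊αF * (N : ℝ)⌋₊
  hNU : ∀ N : ℕ, unfriendlyCount (inst N) = ⌊αU * (N : ℝ)⌋₊
  hNC : ∀ N : ℕ, contingentCount (inst N) = N - ⌊αF * (N : ℝ)⌋₊ - ⌊αU * (N : ℝ)⌋₊

open Finset

noncomputable def bern {M : ℕ} (p : Fin M → ℝ) (v : Fin M → Bool) : ℝ :=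
  ∏ n, if v n = true then p n else 1 - p n

noncomputable def cntR {M : ℕ} (v : Fin M → Bool) : ℝ :=
  ∑ n, if v n = true then (1 : ℝ) else 0

lemma cntR_eq {M : ℕ} (v : Fin M → Bool) :
    ((univ.filter fun n => v n = true).card : ℝ) = cntR v := by
  rw [cntR, Finset.card_filter]
  push_cast
  rfl

lemma sum_prod_bool {M : ℕ} (F : Fin M → Bool → ℝ) :
    ∑ v : Fin M → Bool, ∏ n, F n (v n) = ∏ n, (F n false + F n true) := by
  classical
  have h := Finset.prod_univ_sum (fun _ : Fin M => (Finset.univ : Finset Bool)) F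
  rw [Fintype.piFinset_univ] at h
  rw [← h]
  exact Finset.prod_congr rfl fun n _ => by rw [Fintype.sum_bool]; ring

lemma bern_nonneg {M : ℕ} {p : Fin M → ℝ} (hp : ∀ n, 0 ≤ p n ∧ p n ≤ 1)
    (v : Fin M → Bool) : 0 ≤ bern p v :=
  Finset.prod_nonneg fun n _ => by
    cases hvn : v n
    · rw [if_neg (by simp [hvn])]; linarith [(hp n).2]
    · rw [if_pos (by simp [hvn])]; exact (hp n).1

lemma sum_bern_forced {M : ℕ} (p : Fin M → ℝ) (T : Finset (Fin M)) :
    ∑ v : Fin M → Bool, bern p v * ∏ m ∈ T, (if v m = true then (1:ℝ) else 0)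
      = ∏ m ∈ T, p m := by
  classical
  have key : ∀ v : Fin M → Bool,
      bern p v * ∏ m ∈ T, (if v m = true then (1:ℝ) else 0)
        = ∏ n, (fun n (b : Bool) => if n ∈ T then (if b = true then p n else 0)
            else (if b = true then p n else 1 - p n)) n (v n) := by
    intro v
    have h1 : (∏ m ∈ T, (if v m = true then (1:ℝ) else 0))
        = ∏ n, (if n ∈ T then (if v n = true then (1:ℝ) else 0) else 1) := by
      calc ∏ m ∈ T, (if v m = true then (1:ℝ) else 0)
          = ∏ m ∈ T, (if m ∈ T then (if v m = true then (1:ℝ) else 0) else 1) :=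
            Finset.prod_congr rfl fun m hm => by rw [if_pos hm]
        _ = ∏ n, (if n ∈ T then (if v n = true then (1:ℝ) else 0) else 1) :=
            Finset.prod_subset (Finset.subset_univ T) (fun x _ hx => if_neg hx)
    rw [bern, h1, ← Finset.prod_mul_distrib]
    refine Finset.prod_congr rfl fun n _ => ?_
    by_cases hT : n ∈ T <;> by_cases hv : v n = true <;> simp [hT, hv]
  have h2 := sum_prod_bool (fun n (b : Bool) => if n ∈ T then (if b = true then p n else 0)
      else (if b = true then p n else 1 - p n))
  rw [Finset.sum_congr rfl fun v _ => key v, h2]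
  calc ∏ n, _ = ∏ n : Fin M, (if n ∈ T then p n else 1) := by
        refine Finset.prod_congr rfl fun n _ => ?_
        by_cases hT : n ∈ T <;> simp [hT]
    _ = ∏ m ∈ T, p m := by
        rw [← Finset.prod_subset (Finset.subset_univ T) (fun x _ hx => if_neg hx)]
        exact Finset.prod_congr rfl fun m hm => if_pos hm

lemma sum_bern {M : ℕ} (p : Fin M → ℝ) : ∑ v : Fin M → Bool, bern p v = 1 := by
  have h := sum_bern_forced p ∅
  simpa using h

lemma sum_bern_cnt {M : ℕ} (p : Fin M → ℝ) :
    ∑ v : Fin M → Bool, bern p v * cntR v = ∑ n, p n := by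
  classical
  have h1 : ∀ v : Fin M → Bool, bern p v * cntR v
      = ∑ n, bern p v * ∏ m ∈ ({n} : Finset (Fin M)), (if v m = true then (1:ℝ) else 0) := by
    intro v
    rw [cntR, Finset.mul_sum]
    exact Finset.sum_congr rfl fun n _ => by rw [Finset.prod_singleton]
  rw [Finset.sum_congr rfl fun v _ => h1 v, Finset.sum_comm]
  exact Finset.sum_congr rfl fun n _ => by
    rw [sum_bern_forced p {n}, Finset.prod_singleton]

lemma sum_bern_cnt_sq {M : ℕ} (p : Fin M → ℝ) :
    ∑ v : Fin M → Bool, bern p v * (cntR v)^2 ≤ (∑ n, p n)^2 + ∑ n, p n := by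
  classical
  have expand : ∀ v : Fin M → Bool, bern p v * (cntR v)^2
      = ∑ n : Fin M, ∑ k : Fin M, bern p v
          * ((if v n = true then (1:ℝ) else 0) * (if v k = true then (1:ℝ) else 0)) := by
    intro v
    rw [sq, cntR, Finset.sum_mul_sum, Finset.mul_sum]
    exact Finset.sum_congr rfl fun n _ => by rw [Finset.mul_sum]
  rw [Finset.sum_congr rfl fun v _ => expand v, Finset.sum_comm]
  have hterm : ∀ n k : Fin M, (∑ v : Fin M → Bool, bern p v
      * ((if v n = true then (1:ℝ) else 0) * (if v k = true then (1:ℝ) else 0)))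
      ≤ p n * p k + (if n = k then p n else 0) := by
    intro n k
    by_cases hnk : n = k
    · subst hnk
      have h1 : ∀ v : Fin M → Bool, bern p v
          * ((if v n = true then (1:ℝ) else 0) * (if v n = true then (1:ℝ) else 0))
          = bern p v * ∏ m ∈ ({n} : Finset (Fin M)), (if v m = true then (1:ℝ) else 0) := by
        intro v; rw [Finset.prod_singleton]; by_cases h : v n = true <;> simp [h]
      rw [Finset.sum_congr rfl fun v _ => h1 v, sum_bern_forced p {n}, Finset.prod_singleton,
        if_pos rfl]
      nlinarith [mul_self_nonneg (p n)]
    · have h1 : ∀ v : Fin M → Bool, bern p v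
          * ((if v n = true then (1:ℝ) else 0) * (if v k = true then (1:ℝ) else 0))
          = bern p v * ∏ m ∈ ({n, k} : Finset (Fin M)), (if v m = true then (1:ℝ) else 0) := by
        intro v; rw [Finset.prod_pair hnk]
      rw [Finset.sum_congr rfl fun v _ => h1 v, sum_bern_forced p {n, k},
        Finset.prod_pair hnk, if_neg hnk, add_zero]
  calc ∑ n : Fin M, ∑ v : Fin M → Bool, ∑ k : Fin M, bern p v
          * ((if v n = true then (1:ℝ) else 0) * (if v k = true then (1:ℝ) else 0))
      = ∑ n : Fin M, ∑ k : Fin M, ∑ v : Fin M → Bool, bern p v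
          * ((if v n = true then (1:ℝ) else 0) * (if v k = true then (1:ℝ) else 0)) :=
        Finset.sum_congr rfl fun n _ => Finset.sum_comm
    _ ≤ ∑ n : Fin M, ∑ k : Fin M, (p n * p k + (if n = k then p n else 0)) :=
        Finset.sum_le_sum fun n _ => Finset.sum_le_sum fun k _ => hterm n k
    _ = (∑ n, p n)^2 + ∑ n, p n := by
        have h2 : ∀ n : Fin M, ∑ k : Fin M, (p n * p k + (if n = k then p n else 0))
            = p n * (∑ k, p k) + p n := by
          intro n
          rw [Finset.sum_add_distrib, ← Finset.mul_sum, Finset.sum_ite_eq, if_pos (mem_univ n)]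
        rw [Finset.sum_congr rfl fun n _ => h2 n, Finset.sum_add_distrib, ← Finset.sum_mul, sq]

lemma sum_bern_var {M : ℕ} (p : Fin M → ℝ) :
    ∑ v : Fin M → Bool, bern p v * (cntR v - ∑ n, p n)^2 ≤ ∑ n, p n := by
  have h1 := sum_bern p
  have h2 := sum_bern_cnt p
  have h3 := sum_bern_cnt_sq p
  have expand : ∑ v : Fin M → Bool, bern p v * (cntR v - ∑ n, p n)^2
      = (∑ v : Fin M → Bool, bern p v * (cntR v)^2)
        - (2 * (∑ n, p n)) * (∑ v : Fin M → Bool, bern p v * cntR v)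
        + (∑ n, p n)^2 * (∑ v : Fin M → Bool, bern p v) := by
    calc ∑ v : Fin M → Bool, bern p v * (cntR v - ∑ n, p n)^2
        = ∑ v : Fin M → Bool, (bern p v * (cntR v)^2
            - (2 * (∑ n, p n)) * (bern p v * cntR v) + (∑ n, p n)^2 * bern p v) :=
          Finset.sum_congr rfl fun v _ => by ring
      _ = (∑ v : Fin M → Bool, bern p v * (cntR v)^2)
            - (∑ v : Fin M → Bool, (2 * (∑ n, p n)) * (bern p v * cntR v))
            + ∑ v : Fin M → Bool, (∑ n, p n)^2 * bern p v := by
          rw [Finset.sum_add_distrib, Finset.sum_sub_distrib]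
      _ = _ := by rw [← Finset.mul_sum, ← Finset.mul_sum]
  rw [expand, h1, h2]
  nlinarith [h3]

lemma sum_bern_tail {M : ℕ} {p : Fin M → ℝ} (hp : ∀ n, 0 ≤ p n ∧ p n ≤ 1)
    (P : (Fin M → Bool) → Prop) [DecidablePred P] {a : ℝ} (ha : 0 < a)
    (hP : ∀ v, P v → a^2 ≤ (cntR v - ∑ n, p n)^2) :
    ∑ v : Fin M → Bool, (if P v then bern p v else 0) ≤ (∑ n, p n) / a^2 := by
  rw [le_div_iff₀ (by positivity)]
  calc (∑ v : Fin M → Bool, (if P v then bern p v else 0)) * a^2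
      = ∑ v : Fin M → Bool, (if P v then bern p v else 0) * a^2 := by rw [Finset.sum_mul]
    _ ≤ ∑ v : Fin M → Bool, bern p v * (cntR v - ∑ n, p n)^2 := by
        refine Finset.sum_le_sum fun v _ => ?_
        by_cases h : P v
        · rw [if_pos h]
          exact mul_le_mul_of_nonneg_left (hP v h) (bern_nonneg hp v)
        · rw [if_neg h, zero_mul]
          exact mul_nonneg (bern_nonneg hp v) (sq_nonneg _)
    _ ≤ ∑ n, p n := sum_bern_var p


open Finset

lemma pA_bounds (I : BInstance) {s : Profile I} (h : ValidProfile I s)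
    (n : Fin I.N) (ω : WState) : 0 ≤ pA I s n ω ∧ pA I s n ω ≤ 1 := by
  obtain ⟨h0f, h1f⟩ := h n false
  obtain ⟨h0t, h1t⟩ := h n true
  have hf := I.hPsig false ω
  have ht := I.hPsig true ω
  have hs := I.hPsigsum ω
  refine ⟨add_nonneg (mul_nonneg hf h0f) (mul_nonneg ht h0t), ?_⟩
  have e1 : I.Psig false ω * s n false ≤ I.Psig false ω := mul_le_of_le_one_right hf h1f
  have e2 : I.Psig true ω * s n true ≤ I.Psig true ω := mul_le_of_le_one_right ht h1t
  unfold pA; linarith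

lemma lambdaA_eq_sum (I : BInstance) (s : Profile I) (ω : WState) :
    lambdaA I s ω = ∑ v : Fin I.N → Bool,
      (if I.μ * (I.N : ℝ) ≤ cntR v then bern (fun n => pA I s n ω) v else 0) := by
  unfold lambdaA
  refine Finset.sum_congr rfl fun v _ => ?_
  rw [cntR_eq v]
  rfl

lemma lambdaA_mem (I : BInstance) {s : Profile I} (h : ValidProfile I s) (ω : WState) :
    0 ≤ lambdaA I s ω ∧ lambdaA I s ω ≤ 1 := by
  have hp : ∀ n, 0 ≤ pA I s n ω ∧ pA I s n ω ≤ 1 := fun n => pA_bounds I h n ω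
  rw [lambdaA_eq_sum]
  constructor
  · refine Finset.sum_nonneg fun v _ => ?_
    by_cases hv : I.μ * (I.N : ℝ) ≤ cntR v
    · rw [if_pos hv]; exact bern_nonneg hp v
    · rw [if_neg hv]
  · calc ∑ v : Fin I.N → Bool,
          (if I.μ * (I.N : ℝ) ≤ cntR v then bern (fun n => pA I s n ω) v else 0)
        ≤ ∑ v : Fin I.N → Bool, bern (fun n => pA I s n ω) v := by
          refine Finset.sum_le_sum fun v _ => ?_
          by_cases hv : I.μ * (I.N : ℝ) ≤ cntR v
          · rw [if_pos hv]
          · rw [if_neg hv]; exact bern_nonneg hp v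
      _ = 1 := sum_bern _

lemma lambdaA_upper (I : BInstance) {s : Profile I} (h : ValidProfile I s) {a : ℝ}
    (ha : 0 < a) (hμ : (∑ n, pA I s n WState.L) + a ≤ I.μ * (I.N : ℝ)) :
    lambdaA I s WState.L ≤ (∑ n, pA I s n WState.L) / a^2 := by
  classical
  rw [lambdaA_eq_sum]
  refine sum_bern_tail (fun n => pA_bounds I h n _) _ ha fun v hv => ?_
  have h1 : a ≤ cntR v - ∑ n, pA I s n WState.L := by linarith
  exact pow_le_pow_left₀ ha.le h1 2

lemma lambdaA_lower (I : BInstance) {s : Profile I} (h : ValidProfile I s) {a : ℝ}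
    (ha : 0 < a) (hμ : I.μ * (I.N : ℝ) + a ≤ ∑ n, pA I s n WState.H) :
    1 - (∑ n, pA I s n WState.H) / a^2 ≤ lambdaA I s WState.H := by
  classical
  have hp : ∀ n, 0 ≤ pA I s n WState.H ∧ pA I s n WState.H ≤ 1 :=
    fun n => pA_bounds I h n _
  have hcompl : lambdaA I s WState.H
      = 1 - ∑ v : Fin I.N → Bool,
          (if ¬ (I.μ * (I.N : ℝ) ≤ cntR v) then bern (fun n => pA I s n WState.H) v else 0) := by
    rw [lambdaA_eq_sum, ← sum_bern (fun n => pA I s n WState.H), ← Finset.sum_sub_distrib]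
    refine Finset.sum_congr rfl fun v _ => ?_
    by_cases hv : I.μ * (I.N : ℝ) ≤ cntR v <;> simp [hv]
  rw [hcompl]
  have htail := sum_bern_tail (p := fun n => pA I s n WState.H) hp
    (fun v => ¬ (I.μ * (I.N : ℝ) ≤ cntR v)) ha (fun v hv => ?_)
  · linarith
  · push_neg at hv
    have h1 : a ≤ (∑ n, pA I s n WState.H) - cntR v := by linarith
    calc a^2 ≤ ((∑ n, pA I s n WState.H) - cntR v)^2 := pow_le_pow_left₀ ha.le h1 2
      _ = (cntR v - ∑ n, pA I s n WState.H)^2 := by ring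


lemma ncard_setOf_eq_card_filter {α : Type*} [Fintype α] (p : α → Prop) [DecidablePred p] :
    {x | p x}.ncard = (Finset.univ.filter p).card := by
  rw [Set.ncard_eq_toFinset_card', Set.toFinset_setOf]

set_option maxHeartbeats 2000000 in
/-- Theorem 2, second part. For a sequence of regular strategy profiles
on a sequence of instances, if the fidelities do not converge to `1`, then for some
constant `ε > 0` the profile `Σ_N` fails to be an `ε`-strong BNE for infinitely many `N`. -/
theorem low_fidelity_implies_not_eps_BNE (S : BSeqFrac)
    (sp : ∀ N : ℕ, Profile (S.inst N))
    (hval : ∀ N, ValidProfile (S.inst N) (sp N))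
    (hreg : ∀ N, Regular (S.inst N) (sp N))
    (hfid : ¬ Filter.Tendsto (fun N => fid (S.inst N) (sp N)) Filter.atTop (nhds 1)) :
    ∃ ε : ℝ, 0 < ε ∧ ∀ m : ℕ, ∃ N : ℕ, m ≤ N ∧ ¬ IsEpsBNE (S.inst N) (sp N) ε := by
  classical
  rw [Metric.tendsto_atTop] at hfid
  push_neg at hfid
  obtain ⟨δ, hδ0, hδ⟩ := hfid
  -- global constants
  have hαC : 0 < S.αC := by
    have h1 := S.hαFμ; have h2 := S.hαUμ; have h3 := S.hαsum; linarith
  set t : ℝ := (S.params.μ - S.αF) / S.αC with ht_def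
  have ht0 : 0 < t := div_pos (by linarith [S.hαFμ]) hαC
  have ht1 : t < 1 := by
    rw [ht_def, div_lt_one hαC]
    have h2 := S.hαUμ; have h3 := S.hαsum; linarith
  have hkey : S.αF + S.αC * t = S.params.μ := by
    rw [ht_def]; field_simp; ring
  set PhL : ℝ := S.params.Psig true WState.L with hPhL_def
  set PhH : ℝ := S.params.Psig true WState.H with hPhH_def
  have hΔ : 0 < PhH - PhL := by
    have := S.params.hcorr; rw [hPhL_def, hPhH_def]; linarith
  set d : ℝ := min t (1 - t) with hd_def
  have hd0 : 0 < d := lt_min ht0 (by linarith)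
  have hdt : d ≤ t := min_le_left _ _
  have hd1t : d ≤ 1 - t := min_le_right _ _
  have hPhL0 : 0 ≤ PhL := S.params.hPsig true WState.L
  have hPhH1 : PhH ≤ 1 := by
    have h1 := S.params.hPsigsum WState.H
    have h2 := S.params.hPsig false WState.H
    rw [hPhH_def]; linarith
  have hPhH0 : 0 ≤ PhH := S.params.hPsig true WState.H
  have hPhL1 : PhL ≤ 1 := by linarith
  set βl : ℝ := t - d * ((PhL + PhH) / 2) with hβl_def
  set βh : ℝ := βl + d with hβh_def
  have hdm0 : 0 ≤ d * ((PhL + PhH) / 2) := mul_nonneg hd0.le (by linarith)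
  have hdm1 : d * ((PhL + PhH) / 2) ≤ d := mul_le_of_le_one_right hd0.le (by linarith)
  have hβl0 : 0 ≤ βl := by rw [hβl_def]; linarith
  have hβl1 : βl ≤ 1 := by rw [hβl_def]; linarith
  have hβh0 : 0 ≤ βh := by rw [hβh_def]; linarith
  have hβh1 : βh ≤ 1 := by rw [hβh_def, hβl_def]; linarith
  set qv : WState → ℝ := fun ω => S.params.Psig false ω * βl + S.params.Psig true ω * βh
    with hqv
  have hPfL : S.params.Psig false WState.L = 1 - PhL := by
    have := S.params.hPsigsum WState.L; rw [hPhL_def]; linarith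
  have hPfH : S.params.Psig false WState.H = 1 - PhH := by
    have := S.params.hPsigsum WState.H; rw [hPhH_def]; linarith
  have hqvL : qv WState.L = t - d * (PhH - PhL) / 2 := by
    simp only [hqv]
    rw [hPfL, ← hPhL_def, hβh_def, hβl_def]; ring
  have hqvH : qv WState.H = t + d * (PhH - PhL) / 2 := by
    simp only [hqv]
    rw [hPfH, ← hPhH_def, hβh_def, hβl_def]; ring
  have hqv0 : ∀ ω, 0 ≤ qv ω := by
    intro ω; simp only [hqv]
    exact add_nonneg (mul_nonneg (S.params.hPsig false ω) hβl0)
      (mul_nonneg (S.params.hPsig true ω) hβh0)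
  have hqv1 : ∀ ω, qv ω ≤ 1 := by
    intro ω; simp only [hqv]
    have e1 := mul_le_of_le_one_right (S.params.hPsig false ω) hβl1
    have e2 := mul_le_of_le_one_right (S.params.hPsig true ω) hβh1
    linarith only [e1, e2, S.params.hPsigsum ω]
  set c : ℝ := S.αC * d * (PhH - PhL) / 4 with hc_def
  have hc0 : 0 < c := by
    rw [hc_def]
    have : 0 < S.αC * d * (PhH - PhL) := mul_pos (mul_pos hαC hd0) hΔ
    linarith
  have hqLkey : S.αF + S.αC * qv WState.L = S.params.μ - 2 * c := by
    rw [hqvL, hc_def]; linear_combination hkey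
  have hqHkey : S.αF + S.αC * qv WState.H = S.params.μ + 2 * c := by
    rw [hqvH, hc_def]; linear_combination hkey
  set Br : ℝ := (S.params.B : ℝ) with hBr_def
  have hBr1 : 1 ≤ Br := by rw [hBr_def]; exact_mod_cast S.params.hB
  have hBr0 : 0 ≤ Br := by linarith
  refine ⟨δ / 2, by linarith, fun m₀ => ?_⟩
  obtain ⟨N, hNM, hNdist⟩ :=
    hδ (max m₀ (⌈2 / c⌉₊ + ⌈1 / S.αC⌉₊ + ⌈4 * Br / (δ * c ^ 2)⌉₊ + 1))
  have hNm₀ : m₀ ≤ N := le_trans (le_max_left _ _) hNM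
  have hblock : ⌈2 / c⌉₊ + ⌈1 / S.αC⌉₊ + ⌈4 * Br / (δ * c ^ 2)⌉₊ + 1 ≤ N :=
    le_trans (le_max_right _ _) hNM
  have hN1 : 1 ≤ N := by omega
  have hNr : (1:ℝ) ≤ (N:ℝ) := by exact_mod_cast hN1
  have hNc : 2 / c ≤ (N:ℝ) :=
    le_trans (Nat.le_ceil _) (by exact_mod_cast (by omega : ⌈2/c⌉₊ ≤ N))
  have hNαC : 1 / S.αC ≤ (N:ℝ) :=
    le_trans (Nat.le_ceil _) (by exact_mod_cast (by omega : ⌈1/S.αC⌉₊ ≤ N))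
  have hNB : 4 * Br / (δ * c ^ 2) < (N:ℝ) :=
    lt_of_le_of_lt (Nat.le_ceil _)
      (by exact_mod_cast (by omega : ⌈4 * Br / (δ * c ^ 2)⌉₊ < N))
  have hcN2 : 2 ≤ c * (N:ℝ) := by rw [div_le_iff₀ hc0] at hNc; linarith only [hNc]
  have hαCN : 1 ≤ S.αC * (N:ℝ) := by rw [div_le_iff₀ hαC] at hNαC; linarith only [hNαC]
  have hδcN : 4 * Br < δ * c ^ 2 * (N:ℝ) := by
    rw [div_lt_iff₀ (by positivity)] at hNB; linarith only [hNB]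
  have hIN : (S.inst N).N = N := S.hN N
  have hIpar : (S.inst N).toBParams = S.params := S.hshare N
  have hμI : (S.inst N).μ = S.params.μ := congrArg BParams.μ hIpar
  have hPLI : (S.inst N).PL = S.params.PL := congrArg BParams.PL hIpar
  have hPHI : (S.inst N).PH = S.params.PH := congrArg BParams.PH hIpar
  have hPsigI : (S.inst N).Psig = S.params.Psig := congrArg BParams.Psig hIpar
  have hBI : (S.inst N).B = S.params.B := congrArg BParams.B hIpar
  have hINr : ((S.inst N).N : ℝ) = (N:ℝ) := by rw [hIN]
  -- counting
  set NFn : ℕ := ⌊S.αF * (N:ℝ)⌋₊ with hNFn_def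
  set NUn : ℕ := ⌊S.αU * (N:ℝ)⌋₊ with hNUn_def
  have hNFle : (NFn : ℝ) ≤ S.αF * (N:ℝ) :=
    Nat.floor_le (mul_nonneg S.hαF0 (Nat.cast_nonneg N))
  have hNUle : (NUn : ℝ) ≤ S.αU * (N:ℝ) :=
    Nat.floor_le (mul_nonneg S.hαU0 (Nat.cast_nonneg N))
  have hNFge : S.αF * (N:ℝ) - 1 ≤ (NFn : ℝ) := by
    have := Nat.lt_floor_add_one (S.αF * (N:ℝ)); push_cast at this ⊢; linarith only [this]
  have hNUge : S.αU * (N:ℝ) - 1 ≤ (NUn : ℝ) := by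
    have := Nat.lt_floor_add_one (S.αU * (N:ℝ)); push_cast at this ⊢; linarith only [this]
  have hsumle : NFn + NUn ≤ N := by
    have h1 : (NFn:ℝ) + (NUn:ℝ) ≤ (N:ℝ) := by
      have e : (S.αF + S.αU) * (N:ℝ) = S.αF * N + S.αU * N := by ring
      have h2 : (S.αF + S.αU) * (N:ℝ) ≤ 1 * (N:ℝ) := by
        apply mul_le_mul_of_nonneg_right _ (Nat.cast_nonneg N)
        have := S.hαsum; have := S.hαC0; linarith
      rw [e] at h2; linarith only [h2, hNFle, hNUle]
    exact_mod_cast h1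
  set NCn : ℕ := N - NFn - NUn with hNCn_def
  have hNCcast : (NCn : ℝ) = (N:ℝ) - (NFn:ℝ) - (NUn:ℝ) := by
    rw [hNCn_def]
    have h3 : N - NFn - NUn = N - (NFn + NUn) := by omega
    rw [h3, Nat.cast_sub hsumle]; push_cast; ring
  have hαCval : S.αC = 1 - S.αF - S.αU := by have := S.hαsum; linarith
  have hNCge : S.αC * (N:ℝ) ≤ (NCn:ℝ) := by
    have e : S.αC * (N:ℝ) = (N:ℝ) - S.αF * N - S.αU * N := by rw [hαCval]; ring
    rw [hNCcast, e]; linarith only [hNFle, hNUle]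
  have hNCle : (NCn:ℝ) ≤ S.αC * (N:ℝ) + 2 := by
    have e : S.αC * (N:ℝ) = (N:ℝ) - S.αF * N - S.αU * N := by rw [hαCval]; ring
    rw [hNCcast, e]; linarith only [hNFge, hNUge]
  -- partition
  have hFU : ∀ n, Friendly (S.inst N) n → Unfriendly (S.inst N) n → False :=
    fun n hF hU => absurd (hF WState.L) (not_lt.2 (le_of_lt (hU WState.L)))
  have hFC : ∀ n, Friendly (S.inst N) n → Contingent (S.inst N) n → False :=
    fun n hF hC => absurd (hF WState.L) (not_lt.2 (le_of_lt hC.2))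
  have hUC : ∀ n, Unfriendly (S.inst N) n → Contingent (S.inst N) n → False :=
    fun n hU hC => absurd (hU WState.H) (not_lt.2 (le_of_lt hC.1))
  have huniv : {n | Friendly (S.inst N) n} ∪ {n | Unfriendly (S.inst N) n}
      ∪ {n | Contingent (S.inst N) n} = (Set.univ : Set (Fin (S.inst N).N)) := by
    apply Set.eq_of_subset_of_ncard_le (Set.subset_univ _)
    have hd1 : Disjoint {n | Friendly (S.inst N) n} {n | Unfriendly (S.inst N) n} :=
      Set.disjoint_left.2 fun {a} ha hb => hFU a ha hb
    have hd2 : Disjoint ({n | Friendly (S.inst N) n} ∪ {n | Unfriendly (S.inst N) n})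
        {n | Contingent (S.inst N) n} := by
      rw [Set.disjoint_union_left]
      exact ⟨Set.disjoint_left.2 fun {a} ha hb => hFC a ha hb,
        Set.disjoint_left.2 fun {a} ha hb => hUC a ha hb⟩
    rw [Set.ncard_union_eq hd2, Set.ncard_union_eq hd1]
    have e1 : {n | Friendly (S.inst N) n}.ncard = NFn := S.hNF N
    have e2 : {n | Unfriendly (S.inst N) n}.ncard = NUn := S.hNU N
    have e3 : {n | Contingent (S.inst N) n}.ncard = NCn := S.hNC N
    rw [e1, e2, e3, Set.ncard_univ, Nat.card_eq_fintype_card, Fintype.card_fin, hIN]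
    omega
  have htri : ∀ n, Friendly (S.inst N) n ∨ Unfriendly (S.inst N) n
      ∨ Contingent (S.inst N) n := by
    intro n
    have h := huniv ▸ Set.mem_univ n
    simpa [Set.mem_union, Set.mem_setOf_eq, or_assoc] using h
  -- the deviation profile
  set sp' : Profile (S.inst N) := fun n s =>
    if Contingent (S.inst N) n then (if s = true then βh else βl) else sp N n s with hsp'
  have hval' : ValidProfile (S.inst N) sp' := by
    intro n s
    simp only [hsp']
    by_cases hC : Contingent (S.inst N) n
    · rw [if_pos hC]
      by_cases hs : s = true
      · rw [if_pos hs]; exact ⟨hβh0, hβh1⟩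
      · rw [if_neg hs]; exact ⟨hβl0, hβl1⟩
    · rw [if_neg hC]; exact hval N n s
  have hpAC : ∀ ω n, Contingent (S.inst N) n → pA (S.inst N) sp' n ω = qv ω := by
    intro ω n hC
    simp only [pA, hsp', if_pos hC, hqv, hPsigI]
    norm_num
  have hpAF : ∀ ω n, Friendly (S.inst N) n → pA (S.inst N) sp' n ω = 1 := by
    intro ω n hF
    have hnc : ¬ Contingent (S.inst N) n := fun hC => hFC n hF hC
    have h1 := (hreg N).1 n hF false
    have h2 := (hreg N).1 n hF true
    simp only [pA, hsp', if_neg hnc, h1, h2, mul_one]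
    exact (S.inst N).hPsigsum ω
  have hpAU : ∀ ω n, Unfriendly (S.inst N) n → pA (S.inst N) sp' n ω = 0 := by
    intro ω n hU
    have hnc : ¬ Contingent (S.inst N) n := fun hC => hUC n hU hC
    have h1 := (hreg N).2 n hU false
    have h2 := (hreg N).2 n hU true
    simp only [pA, hsp', if_neg hnc, h1, h2, mul_zero, add_zero]
  have hsum : ∀ ω, (∑ n, pA (S.inst N) sp' n ω) = (NFn:ℝ) + qv ω * (NCn:ℝ) := by
    intro ω
    have point : ∀ n, pA (S.inst N) sp' n ω
        = (if Friendly (S.inst N) n then (1:ℝ) else 0)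
          + qv ω * (if Contingent (S.inst N) n then (1:ℝ) else 0) := by
      intro n
      rcases htri n with hF | hU | hC
      · rw [hpAF ω n hF, if_pos hF, if_neg (fun hC => hFC n hF hC)]; ring
      · rw [hpAU ω n hU, if_neg (fun hF => hFU n hF hU), if_neg (fun hC => hUC n hU hC)]; ring
      · rw [hpAC ω n hC, if_neg (fun hF => hFC n hF hC), if_pos hC]; ring
    rw [Finset.sum_congr rfl fun n _ => point n, Finset.sum_add_distrib, ← Finset.mul_sum]
    congr 1
    · rw [Finset.sum_boole]
      norm_cast
      rw [← ncard_setOf_eq_card_filter]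
      exact S.hNF N
    · congr 1
      rw [Finset.sum_boole]
      norm_cast
      rw [← ncard_setOf_eq_card_filter]
      exact S.hNC N
  -- expectation bounds
  have hEL : (∑ n, pA (S.inst N) sp' n WState.L) + c * (N:ℝ)
      ≤ (S.inst N).μ * ((S.inst N).N : ℝ) := by
    rw [hsum WState.L, hμI, hINr]
    have h1 : qv WState.L * (NCn:ℝ) ≤ qv WState.L * (S.αC * (N:ℝ) + 2) :=
      mul_le_mul_of_nonneg_left hNCle (hqv0 _)
    have h2 : qv WState.L * (S.αC * (N:ℝ) + 2)
        = S.αC * qv WState.L * (N:ℝ) + 2 * qv WState.L := by ring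
    have h3 : S.αF * (N:ℝ) + S.αC * qv WState.L * (N:ℝ)
        = S.params.μ * (N:ℝ) - 2 * (c * (N:ℝ)) := by
      linear_combination (N:ℝ) * hqLkey
    linarith only [h1, h2, h3, hNFle, hqv1 WState.L, hcN2]
  have hEH : (S.inst N).μ * ((S.inst N).N : ℝ) + c * (N:ℝ)
      ≤ ∑ n, pA (S.inst N) sp' n WState.H := by
    rw [hsum WState.H, hμI, hINr]
    have h1 : qv WState.H * (S.αC * (N:ℝ)) ≤ qv WState.H * (NCn:ℝ) :=
      mul_le_mul_of_nonneg_left hNCge (hqv0 _)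
    have h2 : qv WState.H * (S.αC * (N:ℝ)) = S.αC * qv WState.H * (N:ℝ) := by ring
    have h3 : S.αF * (N:ℝ) + S.αC * qv WState.H * (N:ℝ)
        = S.params.μ * (N:ℝ) + 2 * (c * (N:ℝ)) := by
      linear_combination (N:ℝ) * hqHkey
    linarith only [h1, h2, h3, hNFge, hcN2]
  -- tail bounds
  have hcN0 : 0 < c * (N:ℝ) := mul_pos hc0 (lt_of_lt_of_le one_pos hNr)
  have hsumle1 : ∀ ω, (∑ n, pA (S.inst N) sp' n ω) ≤ (N:ℝ) := by
    intro ω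
    calc (∑ n, pA (S.inst N) sp' n ω) ≤ ∑ _n : Fin (S.inst N).N, (1:ℝ) :=
        Finset.sum_le_sum fun n _ => (pA_bounds _ hval' n ω).2
      _ = ((S.inst N).N : ℝ) := by simp
      _ = (N:ℝ) := hINr
  set E : ℝ := (N:ℝ) / (c * (N:ℝ))^2 with hE_def
  have hE0 : 0 ≤ E := by
    rw [hE_def]; positivity
  have hlamLb : lambdaA (S.inst N) sp' WState.L ≤ E := by
    rw [hE_def]
    calc lambdaA (S.inst N) sp' WState.L
        ≤ (∑ n, pA (S.inst N) sp' n WState.L) / (c * (N:ℝ))^2 :=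
          lambdaA_upper (S.inst N) hval' hcN0 hEL
      _ ≤ (N:ℝ) / (c * (N:ℝ))^2 := by
          gcongr
          exact hsumle1 _
  have hlamHb : 1 - E ≤ lambdaA (S.inst N) sp' WState.H := by
    have h1 := lambdaA_lower (S.inst N) hval' hcN0 hEH
    have h2 : (∑ n, pA (S.inst N) sp' n WState.H) / (c * (N:ℝ))^2 ≤ E := by
      rw [hE_def]; gcongr; exact hsumle1 _
    linarith only [h1, h2]
  have hNne : (N:ℝ) ≠ 0 := by linarith
  have hefrac : E = 1 / (c^2 * (N:ℝ)) := by
    rw [hE_def]; field_simp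
  have hE2 : 2 * Br * E < δ / 2 := by
    rw [hefrac, show (2:ℝ) * Br * (1 / (c^2 * (N:ℝ))) = 2 * Br / (c^2 * (N:ℝ)) from by ring,
      div_lt_iff₀ (by positivity)]
    linarith only [hδcN]
  -- fidelity facts for the original profile
  have hlL := lambdaA_mem (S.inst N) (hval N) WState.L
  have hlH := lambdaA_mem (S.inst N) (hval N) WState.H
  have hlamL'mem := lambdaA_mem (S.inst N) hval' WState.L
  have hlamH'mem := lambdaA_mem (S.inst N) hval' WState.H
  have hPL0 : 0 < (S.inst N).PL := (S.inst N).hPL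
  have hPH0 : 0 < (S.inst N).PH := (S.inst N).hPH
  have hPsum : (S.inst N).PL + (S.inst N).PH = 1 := (S.inst N).hPsum
  have hPL1 : (S.inst N).PL ≤ 1 := by linarith only [hPsum, hPH0]
  have hPH1 : (S.inst N).PH ≤ 1 := by linarith only [hPsum, hPL0]
  have hfid1 : fid (S.inst N) (sp N) ≤ 1 := by
    unfold fid
    have e1 := mul_le_of_le_one_right hPH0.le hlH.2
    have e2 := mul_nonneg hPL0.le hlL.1
    linarith only [e1, e2, hPsum]
  have hdistval : δ ≤ 1 - fid (S.inst N) (sp N) := by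
    have h := hNdist
    rw [Real.dist_eq, abs_of_nonpos (by linarith only [hfid1])] at h
    linarith only [h]
  have h1mf : 1 - fid (S.inst N) (sp N)
      = (S.inst N).PL * lambdaA (S.inst N) (sp N) WState.L
        + (S.inst N).PH * (1 - lambdaA (S.inst N) (sp N) WState.H) := by
    unfold fid; linear_combination (-1 : ℝ) * hPsum
  -- the gain of each contingent agent
  have hgain : ∀ n, Contingent (S.inst N) n →
      ut (S.inst N) (sp N) n + δ / 2 < ut (S.inst N) sp' n := by
    intro n hC
    have hdiff : ut (S.inst N) sp' n - ut (S.inst N) (sp N) n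
        = (S.inst N).PL * ((lambdaA (S.inst N) (sp N) WState.L - lambdaA (S.inst N) sp' WState.L)
            * (((S.inst N).u n WState.L Alt.R : ℝ) - ((S.inst N).u n WState.L Alt.A : ℝ)))
          + (S.inst N).PH * ((lambdaA (S.inst N) sp' WState.H - lambdaA (S.inst N) (sp N) WState.H)
            * (((S.inst N).u n WState.H Alt.A : ℝ) - ((S.inst N).u n WState.H Alt.R : ℝ))) := by
      unfold ut; ring
    set lL := lambdaA (S.inst N) (sp N) WState.L with hlL_def
    set lH := lambdaA (S.inst N) (sp N) WState.H with hlH_def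
    set lL' := lambdaA (S.inst N) sp' WState.L with hlL'_def
    set lH' := lambdaA (S.inst N) sp' WState.H with hlH'_def
    set gL := ((S.inst N).u n WState.L Alt.R : ℝ) - ((S.inst N).u n WState.L Alt.A : ℝ)
      with hgL_def
    set gH := ((S.inst N).u n WState.H Alt.A : ℝ) - ((S.inst N).u n WState.H Alt.R : ℝ)
      with hgH_def
    have hgL1 : 1 ≤ gL := by
      rw [hgL_def]
      have h := hC.2
      have h' : ((S.inst N).u n WState.L Alt.A : ℝ) + 1 ≤ ((S.inst N).u n WState.L Alt.R : ℝ) := by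
        exact_mod_cast h
      linarith only [h']
    have hgH1 : 1 ≤ gH := by
      rw [hgH_def]
      have h := hC.1
      have h' : ((S.inst N).u n WState.H Alt.R : ℝ) + 1 ≤ ((S.inst N).u n WState.H Alt.A : ℝ) := by
        exact_mod_cast h
      linarith only [h']
    have hIB : (((S.inst N).B : ℕ) : ℝ) = Br := by rw [hBr_def, hBI]
    have hgLB : gL ≤ Br := by
      rw [hgL_def, ← hIB]
      have h1 : ((S.inst N).u n WState.L Alt.R : ℝ) ≤ (((S.inst N).B : ℕ) : ℝ) := by
        exact_mod_cast (S.inst N).hub n WState.L Alt.R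
      have h2 : (0:ℝ) ≤ ((S.inst N).u n WState.L Alt.A : ℝ) := Nat.cast_nonneg _
      linarith only [h1, h2]
    have hgHB : gH ≤ Br := by
      rw [hgH_def, ← hIB]
      have h1 : ((S.inst N).u n WState.H Alt.A : ℝ) ≤ (((S.inst N).B : ℕ) : ℝ) := by
        exact_mod_cast (S.inst N).hub n WState.H Alt.A
      have h2 : (0:ℝ) ≤ ((S.inst N).u n WState.H Alt.R : ℝ) := Nat.cast_nonneg _
      linarith only [h1, h2]
    have T1 : lL ≤ lL * gL := le_mul_of_one_le_right hlL.1 hgL1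
    have T2 : lL' * gL ≤ E * Br := mul_le_mul hlamLb hgLB (by linarith only [hgL1]) hE0
    have T3 : lL - E * Br ≤ (lL - lL') * gL := by
      have e : (lL - lL') * gL = lL * gL - lL' * gL := by ring
      linarith only [T1, T2, e]
    have T4 : (S.inst N).PL * (lL - E * Br) ≤ (S.inst N).PL * ((lL - lL') * gL) :=
      mul_le_mul_of_nonneg_left T3 hPL0.le
    have T5 : (S.inst N).PL * (E * Br) ≤ E * Br :=
      mul_le_of_le_one_left (mul_nonneg hE0 hBr0) hPL1
    have T6 : (S.inst N).PL * lL - E * Br ≤ (S.inst N).PL * ((lL - lL') * gL) := by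
      have e2 : (S.inst N).PL * (lL - E * Br)
          = (S.inst N).PL * lL - (S.inst N).PL * (E * Br) := by ring
      linarith only [T4, T5, e2]
    have U1 : (1 - lH) ≤ (1 - lH) * gH :=
      le_mul_of_one_le_right (by linarith only [hlH.2]) hgH1
    have U2 : (lH' - 1) * Br ≤ (lH' - 1) * gH :=
      mul_le_mul_of_nonpos_left hgHB (by linarith only [hlamH'mem.2])
    have U3 : (-E) * Br ≤ (lH' - 1) * Br :=
      mul_le_mul_of_nonneg_right (by linarith only [hlamHb]) hBr0
    have U4 : (1 - lH) - E * Br ≤ (lH' - lH) * gH := by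
      have e3 : (lH' - lH) * gH = (lH' - 1) * gH + (1 - lH) * gH := by ring
      have e4 : (-E) * Br = -(E * Br) := by ring
      linarith only [U1, U2, U3, e3, e4]
    have U5 : (S.inst N).PH * ((1 - lH) - E * Br) ≤ (S.inst N).PH * ((lH' - lH) * gH) :=
      mul_le_mul_of_nonneg_left U4 hPH0.le
    have U6 : (S.inst N).PH * (E * Br) ≤ E * Br :=
      mul_le_of_le_one_left (mul_nonneg hE0 hBr0) hPH1
    have U7 : (S.inst N).PH * (1 - lH) - E * Br ≤ (S.inst N).PH * ((lH' - lH) * gH) := by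
      have e5 : (S.inst N).PH * ((1 - lH) - E * Br)
          = (S.inst N).PH * (1 - lH) - (S.inst N).PH * (E * Br) := by ring
      linarith only [U5, U6, e5]
    have total : (S.inst N).PL * lL + (S.inst N).PH * (1 - lH) - 2 * (E * Br)
        ≤ ut (S.inst N) sp' n - ut (S.inst N) (sp N) n := by
      rw [hdiff]; linarith only [T6, U7]
    have e6 : 2 * (E * Br) = 2 * Br * E := by ring
    linarith only [total, hdistval, h1mf, hE2, e6]
  -- there is a contingent agent
  have hNC1 : 1 ≤ NCn := by
    have h1 : (1:ℝ) ≤ (NCn:ℝ) := le_trans hαCN hNCge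
    exact_mod_cast h1
  have hCex : {n | Contingent (S.inst N) n}.Nonempty := by
    apply Set.nonempty_of_ncard_ne_zero
    have e3 : {n | Contingent (S.inst N) n}.ncard = NCn := S.hNC N
    omega
  obtain ⟨n₀, hn₀⟩ := hCex
  refine ⟨N, hNm₀, ?_⟩
  intro hBNE
  exact hBNE ⟨{n | Contingent (S.inst N) n}, sp', hval',
    fun n hn => funext fun s => by simp only [hsp']; rw [if_neg (show ¬ Contingent (S.inst N) n from hn)],
    fun n hn => le_of_lt (by linarith only [hgain n hn, hδ0]),
    ⟨n₀, hn₀, hgain n₀ hn₀⟩⟩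



end Voting
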